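/- If there exists a mixed Steiner system MS(1, k, Q × Z_q) where Q = Z_{q_1} × ⋯ × Z_{q_{n−1}}, then the quantity Σ_{i=1}^{n−1}(q_i − 1) − (q − 1)(k − 1) is nonnegative and divisible by k. -/

import Mathlib

section aux
variable {ι : Type*} [Fintype ι] [DecidableEq ι] {β : ι → Type*} [∀ i, DecidableEq (β i)]
  [∀ i, Zero (β i)]

lemma myNorm_single (i : ι) (α : β i) (hα : α ≠ 0) : hammingNorm (Pi.single i α) = 1 := by
  unfold hammingNorm
  rw [show (1 : ℕ) = ({i} : Finset ι).card from (Finset.card_singleton i).symm]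
  congr 1
  ext j
  simp only [Finset.mem_filter, Finset.mem_univ, true_and, Finset.mem_singleton]
  constructor
  · intro hj; by_contra hne; exact hj (Pi.single_eq_of_ne hne α)
  · rintro rfl; simpa using hα

lemma myDist_single {k : ℕ} (hk : 1 ≤ k) (i : ι) (α : β i) (hα : α ≠ 0)
    (c : ∀ i, β i) (hc : hammingNorm c = k) :
    hammingDist (Pi.single i α) c = k - 1 ↔ c i = α := by
  by_cases hci : c i = α
  · simp only [hci, iff_true]
    unfold hammingDist
    have hD : ({j | Pi.single i α j ≠ c j} : Finset ι) = ({j | c j ≠ 0} : Finset ι).erase i := by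
      ext j
      simp only [Finset.mem_filter, Finset.mem_univ, true_and, Finset.mem_erase]
      by_cases hji : j = i
      · subst hji
        simp [Pi.single_eq_same, hci]
      · rw [Pi.single_eq_of_ne hji]
        simp [hji, ne_comm]
    rw [hD, Finset.card_erase_of_mem, ← hc]
    · rfl
    · simp only [Finset.mem_filter, Finset.mem_univ, true_and]
      rw [hci]; exact hα
  · simp only [hci, iff_false]
    have hsub : ({j | c j ≠ 0} : Finset ι) ⊆ ({j | Pi.single i α j ≠ c j} : Finset ι) := by
      intro j hj
      simp only [Finset.mem_filter, Finset.mem_univ, true_and] at hj ⊢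
      by_cases hji : j = i
      · subst hji; rw [Pi.single_eq_same]; exact fun hh => hci hh.symm
      · rw [Pi.single_eq_of_ne hji]; exact fun hh => hj hh.symm
    have hle : k ≤ hammingDist (Pi.single i α) c := by
      rw [← hc]; exact Finset.card_le_card hsub
    omega

end aux

theorem stmt6 (n k : ℕ) (hk : 1 ≤ k) (q : Fin (n + 1) → ℕ) (hq : ∀ i, 2 ≤ q i)
    (h : ∃ C : Finset (∀ i, ZMod (q i)),
      (∀ c ∈ C, hammingNorm c = k) ∧
      ∀ x : ∀ i, ZMod (q i), hammingNorm x = 1 →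
        ∃! c, c ∈ C ∧ hammingDist x c = k - 1) :
    (q (Fin.last n) - 1) * (k - 1) ≤ ∑ i : Fin n, (q i.castSucc - 1) ∧
    k ∣ (∑ i : Fin n, (q i.castSucc - 1)) - (q (Fin.last n) - 1) * (k - 1) := by
  classical
  obtain ⟨C, hCw, hCcov⟩ := h
  haveI : ∀ i, NeZero (q i) := fun i => ⟨by have := hq i; omega⟩
  -- every nonzero point (i, α) is covered by exactly one codeword
  have key : ∀ (i : Fin (n + 1)) (α : ZMod (q i)), α ≠ 0 → ∃! c, c ∈ C ∧ c i = α := by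
    intro i α hα
    have hx1 : hammingNorm (Pi.single i α : ∀ j, ZMod (q j)) = 1 := myNorm_single (β := fun j => ZMod (q j)) i α hα
    obtain ⟨c, ⟨hcC, hcd⟩, huniq⟩ := hCcov (Pi.single i α) hx1
    refine ⟨c, ⟨hcC, (myDist_single hk i α hα c (hCw c hcC)).mp hcd⟩, ?_⟩
    rintro c' ⟨hc'C, hc'i⟩
    exact huniq c' ⟨hc'C, (myDist_single hk i α hα c' (hCw c' hc'C)).mpr hc'i⟩
  -- the covering function
  let g : (Σ i : Fin (n + 1), ZMod (q i)) → (∀ i, ZMod (q i)) :=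
    fun p => if hp : p.2 ≠ 0 then (key p.1 p.2 hp).choose else 0
  have hg1 : ∀ p : Σ i : Fin (n + 1), ZMod (q i), p.2 ≠ 0 → g p ∈ C ∧ (g p) p.1 = p.2 := by
    intro p hp
    simp only [g, dif_pos hp]
    exact (key p.1 p.2 hp).choose_spec.1
  have hg2 : ∀ (p : Σ i : Fin (n + 1), ZMod (q i)) (hp : p.2 ≠ 0) (c : ∀ i, ZMod (q i)),
      c ∈ C → c p.1 = p.2 → g p = c := by
    intro p hp c hc hcp
    simp only [g, dif_pos hp]
    exact ((key p.1 p.2 hp).choose_spec.2 c ⟨hc, hcp⟩).symm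
  -- the point set
  let P : Finset (Σ i : Fin (n + 1), ZMod (q i)) := Finset.univ.filter (fun p => p.2 ≠ 0)
  have hcardfilter : ∀ i : Fin (n + 1),
      (Finset.univ.filter (fun α : ZMod (q i) => α ≠ 0)).card = q i - 1 := by
    intro i
    rw [Finset.filter_ne', Finset.card_erase_of_mem (Finset.mem_univ _), Finset.card_univ,
      ZMod.card]
  have hPcard : P.card = ∑ i : Fin (n + 1), (q i - 1) := by
    have : P = Finset.univ.sigma (fun i : Fin (n + 1) =>
        Finset.univ.filter (fun α : ZMod (q i) => α ≠ 0)) := by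
      ext p
      simp [P, Finset.mem_sigma]
    rw [this, Finset.card_sigma]
    exact Finset.sum_congr rfl fun i _ => hcardfilter i
  -- fiberwise counting
  have hfib : P.card = ∑ c ∈ C, (P.filter (fun p => g p = c)).card := by
    refine Finset.card_eq_sum_card_fiberwise fun p hp => ?_
    exact (hg1 p (by simpa [P] using hp)).1
  have hfibc : ∀ c ∈ C, (P.filter (fun p => g p = c)).card = k := by
    intro c hc
    rw [← hCw c hc]
    unfold hammingNorm
    refine Finset.card_bij (fun p _ => p.1) ?_ ?_ ?_
    · intro p hp
      simp only [Finset.mem_filter, Finset.mem_univ, true_and, P] at hp ⊢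
      obtain ⟨hp2, hgp⟩ := hp
      have := (hg1 p hp2).2
      rw [hgp] at this
      rw [this]; exact hp2
    · intro p hp p' hp' hpp
      simp only [Finset.mem_filter, Finset.mem_univ, true_and, P] at hp hp'
      have e1 : c p.1 = p.2 := by rw [← hp.2]; exact (hg1 p hp.1).2
      have e2 : c p'.1 = p'.2 := by rw [← hp'.2]; exact (hg1 p' hp'.1).2
      obtain ⟨i, a⟩ := p; obtain ⟨i', a'⟩ := p'
      simp only at hpp
      subst hpp
      simp only [Sigma.mk.inj_iff, heq_eq_eq, true_and]
      exact e1.symm.trans e2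
    · intro i hi
      simp only [Finset.mem_filter, Finset.mem_univ, true_and] at hi
      refine ⟨⟨i, c i⟩, ?_, rfl⟩
      simp only [Finset.mem_filter, Finset.mem_univ, true_and, P]
      exact ⟨hi, hg2 ⟨i, c i⟩ hi c hc rfl⟩
  have htotal : ∑ i : Fin (n + 1), (q i - 1) = C.card * k := by
    rw [← hPcard, hfib, Finset.sum_congr rfl hfibc, Finset.sum_const, smul_eq_mul]
  -- there are at least q_last - 1 codewords
  have hQle : q (Fin.last n) - 1 ≤ C.card := by
    rw [← hcardfilter (Fin.last n)]
    refine Finset.card_le_card_of_injOn (fun α => g ⟨Fin.last n, α⟩) ?_ ?_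
    · intro α hα
      simp only [Finset.mem_coe, Finset.mem_filter, Finset.mem_univ, true_and] at hα
      exact (hg1 ⟨Fin.last n, α⟩ hα).1
    · intro α hα α' hα' hgg
      simp only [Finset.mem_coe, Finset.mem_filter, Finset.mem_univ, true_and] at hα hα'
      have e1 := (hg1 ⟨Fin.last n, α⟩ hα).2
      have e2 := (hg1 ⟨Fin.last n, α'⟩ hα').2
      simp only at e1 e2 hgg
      rw [hgg] at e1
      exact e1.symm.trans e2
  -- final arithmetic
  set T := ∑ i : Fin n, (q i.castSucc - 1) with hT
  set Q := q (Fin.last n) - 1 with hQ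
  have htot : T + Q = C.card * k := by
    rw [← htotal, Fin.sum_univ_castSucc]
  have h1 : Q * (k - 1) ≤ T := by
    have e1 : Q * (k - 1) + Q = Q * k := by
      rw [← Nat.mul_succ, Nat.succ_eq_add_one, Nat.sub_add_cancel hk]
    have e2 : Q * k ≤ C.card * k := Nat.mul_le_mul_right k hQle
    linarith
  refine ⟨h1, ⟨C.card - Q, ?_⟩⟩
  have hz : (T : ℤ) + Q = C.card * k := by exact_mod_cast htot
  zify [h1, hQle, hk]
  linear_combination hz
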